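/- For every v ∈ S, ζ_v = n − n/m − 2ℓ_S/m² + 2Δ_v^S/m, where Δ_v^S is the degree of v in the subgraph of G induced by S. -/

import Mathlib

open Finset
open scoped InnerProductSpace

section ZetaAux
variable {V E : Type*} [Fintype V] [DecidableEq V] [Fintype E] [DecidableEq E]
  (G : SimpleGraph V) [DecidableRel G.Adj] (tail head : E → V)

set_option linter.unusedSectionVars false

lemma zeta_card_incident
    (hadj : ∀ e : E, tail e ≠ head e → G.Adj (tail e) (head e))
    (hinj : ∀ e₁ e₂ : E, tail e₁ ≠ head e₁ → tail e₂ ≠ head e₂ →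
      (s(tail e₁, head e₁) : Sym2 V) = s(tail e₂, head e₂) → e₁ = e₂)
    (hsurj : ∀ u v : V, G.Adj u v → ∃ e : E, (s(tail e, head e) : Sym2 V) = s(u, v))
    (w : V) :
    (Finset.univ.filter fun e : E => tail e ≠ head e ∧ (tail e = w ∨ head e = w)).card
      = G.degree w := by
  rw [← SimpleGraph.card_neighborFinset_eq_degree]
  apply Finset.card_bij (fun e _ => if tail e = w then head e else tail e)
  · intro e he
    simp only [mem_filter, mem_univ, true_and] at he
    obtain ⟨hne, h⟩ := he
    rw [SimpleGraph.mem_neighborFinset]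
    split_ifs with ht
    · exact ht ▸ hadj e hne
    · rcases h with h | h
      · exact absurd h ht
      · exact h ▸ (hadj e hne).symm
  · intro e1 h1 e2 h2 heq
    simp only [mem_filter, mem_univ, true_and] at h1 h2
    have k : ∀ e : E, tail e ≠ head e → (tail e = w ∨ head e = w) →
        (s(tail e, head e) : Sym2 V) = s(w, if tail e = w then head e else tail e) := by
      intro e hne h
      split_ifs with ht
      · rw [ht]
      · rcases h with h | h
        · exact absurd h ht
        · rw [h, Sym2.eq_swap]
    apply hinj e1 e2 h1.1 h2.1
    rw [k e1 h1.1 h1.2, k e2 h2.1 h2.2, heq]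
  · intro u hu
    rw [SimpleGraph.mem_neighborFinset] at hu
    obtain ⟨e, he⟩ := hsurj w u hu
    have hwu : w ≠ u := hu.ne
    rw [Sym2.eq_iff] at he
    have hmem : tail e ≠ head e ∧ (tail e = w ∨ head e = w) := by
      rcases he with ⟨h1, h2⟩ | ⟨h1, h2⟩
      · exact ⟨by rw [h1, h2]; exact hwu, Or.inl h1⟩
      · exact ⟨by rw [h1, h2]; exact hwu.symm, Or.inr h2⟩
    refine ⟨e, by simpa using hmem, ?_⟩
    rcases he with ⟨h1, h2⟩ | ⟨h1, h2⟩
    · rw [if_pos h1, h2]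
    · rw [if_neg (by rw [h1]; exact hwu.symm), h1]

lemma zeta_card_incident_S
    (hadj : ∀ e : E, tail e ≠ head e → G.Adj (tail e) (head e))
    (hinj : ∀ e₁ e₂ : E, tail e₁ ≠ head e₁ → tail e₂ ≠ head e₂ →
      (s(tail e₁, head e₁) : Sym2 V) = s(tail e₂, head e₂) → e₁ = e₂)
    (hsurj : ∀ u v : V, G.Adj u v → ∃ e : E, (s(tail e, head e) : Sym2 V) = s(u, v))
    (S : Finset V) (v : V) :
    (Finset.univ.filter fun e : E => tail e ≠ head e ∧
        ((head e = v ∧ tail e ∈ S) ∨ (tail e = v ∧ head e ∈ S))).card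
      = (S.filter fun u => G.Adj v u).card := by
  apply Finset.card_bij (fun e _ => if tail e = v then head e else tail e)
  · intro e he
    simp only [mem_filter, mem_univ, true_and] at he ⊢
    obtain ⟨hne, h⟩ := he
    split_ifs with ht
    · rcases h with ⟨h1, h2⟩ | ⟨h1, h2⟩
      · exact absurd (ht.trans h1.symm) hne
      · exact ⟨h2, ht ▸ hadj e hne⟩
    · rcases h with ⟨h1, h2⟩ | ⟨h1, h2⟩
      · exact ⟨h2, h1 ▸ (hadj e hne).symm⟩
      · exact absurd h1 ht
  · intro e1 h1 e2 h2 heq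
    simp only [mem_filter, mem_univ, true_and] at h1 h2
    have k : ∀ e : E, tail e ≠ head e →
        ((head e = v ∧ tail e ∈ S) ∨ (tail e = v ∧ head e ∈ S)) →
        (s(tail e, head e) : Sym2 V) = s(v, if tail e = v then head e else tail e) := by
      intro e hne h
      split_ifs with ht
      · rw [ht]
      · rcases h with ⟨h1, _⟩ | ⟨h1, _⟩
        · rw [h1, Sym2.eq_swap]
        · exact absurd h1 ht
    apply hinj e1 e2 h1.1 h2.1
    rw [k e1 h1.1 h1.2, k e2 h2.1 h2.2, heq]
  · intro u hu
    simp only [mem_filter] at hu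
    obtain ⟨huS, hadj_vu⟩ := hu
    obtain ⟨e, he⟩ := hsurj v u hadj_vu
    have hvu : v ≠ u := hadj_vu.ne
    rw [Sym2.eq_iff] at he
    have hmem : tail e ≠ head e ∧
        ((head e = v ∧ tail e ∈ S) ∨ (tail e = v ∧ head e ∈ S)) := by
      rcases he with ⟨h1, h2⟩ | ⟨h1, h2⟩
      · exact ⟨by rw [h1, h2]; exact hvu, Or.inr ⟨h1, h2 ▸ huS⟩⟩
      · exact ⟨by rw [h1, h2]; exact hvu.symm, Or.inl ⟨h2, h1 ▸ huS⟩⟩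
    refine ⟨e, by simpa using hmem, ?_⟩
    rcases he with ⟨h1, h2⟩ | ⟨h1, h2⟩
    · rw [if_pos h1, h2]
    · rw [if_neg (by rw [h1]; exact hvu.symm), h1]

lemma zeta_card_inner
    (hadj : ∀ e : E, tail e ≠ head e → G.Adj (tail e) (head e))
    (hinj : ∀ e₁ e₂ : E, tail e₁ ≠ head e₁ → tail e₂ ≠ head e₂ →
      (s(tail e₁, head e₁) : Sym2 V) = s(tail e₂, head e₂) → e₁ = e₂)
    (hsurj : ∀ u v : V, G.Adj u v → ∃ e : E, (s(tail e, head e) : Sym2 V) = s(u, v))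
    (S : Finset V) :
    (Finset.univ.filter fun e : E => tail e ≠ head e ∧ tail e ∈ S ∧ head e ∈ S).card
      = (G.edgeFinset.filter fun p => ∀ a ∈ p, a ∈ S).card := by
  apply Finset.card_bij (fun e _ => (s(tail e, head e) : Sym2 V))
  · intro e he
    simp only [mem_filter, mem_univ, true_and] at he
    obtain ⟨hne, h1, h2⟩ := he
    simp only [mem_filter, SimpleGraph.mem_edgeFinset]
    refine ⟨hadj e hne, ?_⟩
    intro a ha
    rw [Sym2.mem_iff] at ha
    rcases ha with ha | ha
    · exact ha ▸ h1
    · exact ha ▸ h2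
  · intro e1 h1 e2 h2 heq
    simp only [mem_filter, mem_univ, true_and] at h1 h2
    exact hinj e1 e2 h1.1 h2.1 heq
  · intro p hp
    simp only [mem_filter, SimpleGraph.mem_edgeFinset] at hp
    induction p with
    | _ u w =>
      obtain ⟨hadj_uw, hall⟩ := hp
      rw [SimpleGraph.mem_edgeSet] at hadj_uw
      obtain ⟨e, he⟩ := hsurj u w hadj_uw
      have huS : u ∈ S := hall u (by simp)
      have hwS : w ∈ S := hall w (by simp)
      have huw : u ≠ w := hadj_uw.ne
      refine ⟨e, ?_, he⟩
      simp only [mem_filter, mem_univ, true_and]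
      rw [Sym2.eq_iff] at he
      rcases he with ⟨k1, k2⟩ | ⟨k1, k2⟩
      · exact ⟨by rw [k1, k2]; exact huw, k1 ▸ huS, k2 ▸ hwS⟩
      · exact ⟨by rw [k1, k2]; exact huw.symm, k1 ▸ hwS, k2 ▸ huS⟩

lemma zeta_ind_sval {V : Type*} [DecidableEq V] (t h u : V) :
    (if h = u then (-1:ℝ) else if t = u then 1 else 0)
      = (if t = u then (if t = h then 0 else (1:ℝ)) else 0)
        + (if h = u then (-1:ℝ) else 0) := by
  by_cases h1 : h = u <;> by_cases h2 : t = u <;> by_cases h3 : t = h <;>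
    simp_all

lemma zeta_ind_A {V : Type*} [DecidableEq V] (t h v : V) :
    (if h = v then (-1:ℝ) else if t = v then 1 else 0)^2
      = (if t = v ∧ h = v then (1:ℝ) else 0)
        + (if t ≠ h ∧ (t = v ∨ h = v) then (1:ℝ) else 0) := by
  by_cases h1 : h = v <;> by_cases h2 : t = v <;> by_cases h3 : t = h <;>
    simp_all <;> norm_num

lemma zeta_ind_B {V : Type*} [DecidableEq V] (S : Finset V) (t h v : V) (hv : v ∈ S) :
    (if h = v then (-1:ℝ) else if t = v then 1 else 0) *
      ((if t ∈ S then (if t = h then 0 else (1:ℝ)) else 0)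
        + (if h ∈ S then (-1:ℝ) else 0))
      = (if t = v ∧ h = v then (1:ℝ) else 0)
        + (if t ≠ h ∧ ((h = v ∧ t ∉ S) ∨ (t = v ∧ h ∉ S)) then (1:ℝ) else 0) := by
  by_cases h1 : h = v <;> by_cases h2 : t = v <;> by_cases h3 : t = h <;>
    by_cases h4 : t ∈ S <;> by_cases h5 : h ∈ S <;> simp_all <;> norm_num

lemma zeta_ind_C {V : Type*} [DecidableEq V] (S : Finset V) (t h : V) :
    ((if t ∈ S then (if t = h then 0 else (1:ℝ)) else 0)
        + (if h ∈ S then (-1:ℝ) else 0))^2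
      = (if t = h ∧ h ∈ S then (1:ℝ) else 0)
        + (if t ≠ h ∧ ((t ∈ S ∧ h ∉ S) ∨ (t ∉ S ∧ h ∈ S)) then (1:ℝ) else 0) := by
  by_cases h3 : t = h <;> by_cases h4 : t ∈ S <;> by_cases h5 : h ∈ S <;>
    simp_all <;> norm_num

lemma zeta_ind_hand1 {V : Type*} [DecidableEq V] (t h w : V) :
    (if t ≠ h ∧ (t = w ∨ h = w) then (1:ℝ) else 0)
      = (if t = w then (if t ≠ h then (1:ℝ) else 0) else 0)
        + (if h = w then (if t ≠ h then (1:ℝ) else 0) else 0) := by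
  by_cases h1 : t = w <;> by_cases h2 : h = w <;> by_cases h3 : t = h <;>
    simp_all

lemma zeta_ind_hand2 {V : Type*} [DecidableEq V] (S : Finset V) (t h : V) :
    (if t ∈ S then (if t ≠ h then (1:ℝ) else 0) else 0)
      + (if h ∈ S then (if t ≠ h then (1:ℝ) else 0) else 0)
      = (if t ≠ h ∧ ((t ∈ S ∧ h ∉ S) ∨ (t ∉ S ∧ h ∈ S)) then (1:ℝ) else 0)
        + 2 * (if t ≠ h ∧ t ∈ S ∧ h ∈ S then (1:ℝ) else 0) := by
  by_cases h3 : t = h <;> by_cases h4 : t ∈ S <;> by_cases h5 : h ∈ S <;>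
    simp_all <;> norm_num

end ZetaAux

/-- For every `v ∈ S`,
`ζ_v = n − n/m − 2ℓ_S/m² + 2Δ_v^S/m`, where `Δ_v^S` is the degree of `v` in the
subgraph of `G` induced by `S`. -/
theorem zeta_formula
    {V E : Type*} [Fintype V] [DecidableEq V] [Fintype E] [DecidableEq E]
    (G : SimpleGraph V) [DecidableRel G.Adj]
    (tail head : E → V)
    (hadj : ∀ e : E, tail e ≠ head e → G.Adj (tail e) (head e))
    (hinj : ∀ e₁ e₂ : E, tail e₁ ≠ head e₁ → tail e₂ ≠ head e₂ →
      (s(tail e₁, head e₁) : Sym2 V) = s(tail e₂, head e₂) → e₁ = e₂)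
    (hsurj : ∀ u v : V, G.Adj u v → ∃ e : E, (s(tail e, head e) : Sym2 V) = s(u, v))
    (hloops : ∀ v : V, (Finset.univ.filter fun e : E => tail e = v ∧ head e = v).card
        = Fintype.card V - G.degree v)
    (M : ℝ) (hM : 0 < M)
    (x : V → EuclideanSpace ℝ (E ⊕ V))
    (hxE : ∀ (v : V) (e : E),
      x v (Sum.inl e) = if head e = v then -1 else if tail e = v then 1 else 0)
    (hxV : ∀ v u : V, x v (Sum.inr u) = if u = v then M else 0)
    (S : Finset V) (m : ℕ) (hS : S.card = m)
    (c : EuclideanSpace ℝ (E ⊕ V)) (hc : c = (m : ℝ)⁻¹ • ∑ v ∈ S, x v)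
    (hm : 1 ≤ m)
    (z : V → EuclideanSpace ℝ (E ⊕ V)) (hz : ∀ v : V, z v = x v - c)
    (ζ : V → ℝ) (hζ : ∀ v : V, ζ v = ∑ e : E, (z v (Sum.inl e)) ^ 2)
    (ℓ : ℕ) (hℓ : ℓ = (G.edgeFinset.filter fun p => ∀ a ∈ p, a ∈ S).card)
    (Δ : V → ℕ) (hΔ : ∀ v : V, Δ v = (S.filter fun u => G.Adj v u).card) :
    ∀ v ∈ S, ζ v = (Fintype.card V : ℝ) - (Fintype.card V : ℝ) / m
      - 2 * (ℓ : ℝ) / (m : ℝ) ^ 2 + 2 * (Δ v : ℝ) / m := by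
  intro v hv
  set sc : E → ℝ := fun e => ∑ u ∈ S, x u (Sum.inl e) with hsc
  have hzE : ∀ e : E, z v (Sum.inl e) = x v (Sum.inl e) - (m:ℝ)⁻¹ * sc e := by
    intro e
    rw [hz]
    have h1 : (x v - c) (Sum.inl e) = x v (Sum.inl e) - c (Sum.inl e) := rfl
    have h2 : c (Sum.inl e) = (m:ℝ)⁻¹ * sc e := by
      rw [hc]
      have : ((m : ℝ)⁻¹ • ∑ v ∈ S, x v) (Sum.inl e)
          = (m:ℝ)⁻¹ * ((∑ v ∈ S, x v) (Sum.inl e)) := rfl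
      rw [this]
      congr 1
      rw [WithLp.ofLp_sum]
      exact Finset.sum_apply _ _ _
    rw [h1, h2]
  have hsval : ∀ e : E, sc e =
      (if tail e ∈ S then (if tail e = head e then 0 else (1:ℝ)) else 0)
        + (if head e ∈ S then (-1:ℝ) else 0) := by
    intro e
    show (∑ u ∈ S, x u (Sum.inl e)) = _
    have key : ∀ u ∈ S, x u (Sum.inl e) =
        (if tail e = u then (if tail e = head e then 0 else (1:ℝ)) else 0)
          + (if head e = u then (-1:ℝ) else 0) := by
      intro u _
      rw [hxE]
      exact zeta_ind_sval (tail e) (head e) u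
    rw [Finset.sum_congr rfl key, Finset.sum_add_distrib,
      Finset.sum_ite_eq S (tail e), Finset.sum_ite_eq S (head e)]
  -- Sum A
  have hA : ∑ e : E, (x v (Sum.inl e))^2 = (Fintype.card V : ℝ) := by
    have key : ∀ e : E, (x v (Sum.inl e))^2 =
        (if tail e = v ∧ head e = v then (1:ℝ) else 0)
          + (if tail e ≠ head e ∧ (tail e = v ∨ head e = v) then (1:ℝ) else 0) := by
      intro e
      rw [hxE]
      exact zeta_ind_A (tail e) (head e) v
    rw [Finset.sum_congr rfl (fun e _ => key e), Finset.sum_add_distrib,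
      Finset.sum_boole, Finset.sum_boole, hloops,
      zeta_card_incident G tail head hadj hinj hsurj v,
      ← Nat.cast_add, Nat.sub_add_cancel (G.degree_lt_card_verts v).le]
  -- Sum B
  have hB : ∑ e : E, x v (Sum.inl e) * sc e = (Fintype.card V : ℝ) - (Δ v : ℝ) := by
    have key : ∀ e : E, x v (Sum.inl e) * sc e =
        (if tail e = v ∧ head e = v then (1:ℝ) else 0)
          + (if tail e ≠ head e ∧
              ((head e = v ∧ tail e ∉ S) ∨ (tail e = v ∧ head e ∉ S)) then (1:ℝ) else 0) := by
      intro e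
      rw [hxE, hsval]
      exact zeta_ind_B S (tail e) (head e) v hv
    rw [Finset.sum_congr rfl (fun e _ => key e), Finset.sum_add_distrib,
      Finset.sum_boole, Finset.sum_boole, hloops]
    have hsplit : (S.filter fun u => G.Adj v u).card
        + (univ.filter fun e : E => tail e ≠ head e ∧
            ((head e = v ∧ tail e ∉ S) ∨ (tail e = v ∧ head e ∉ S))).card
        = G.degree v := by
      rw [← zeta_card_incident G tail head hadj hinj hsurj v,
        ← zeta_card_incident_S G tail head hadj hinj hsurj S v,
        ← Finset.card_union_of_disjoint ?side]
      · congr 1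
        ext e
        simp only [mem_union, mem_filter, mem_univ, true_and]
        constructor
        · rintro (⟨hne, h⟩ | ⟨hne, h⟩) <;> exact ⟨hne, by tauto⟩
        · rintro ⟨hne, h⟩
          by_cases ht : tail e ∈ S <;> by_cases hh : head e ∈ S <;> tauto
      case side =>
        rw [Finset.disjoint_left]
        intro e he1 he2
        simp only [mem_filter, mem_univ, true_and] at he1 he2
        rcases he1.2 with ⟨a1, a2⟩ | ⟨a1, a2⟩ <;>
          rcases he2.2 with ⟨b1, b2⟩ | ⟨b1, b2⟩
        · exact b2 a2
        · exact b2 (by rw [a1]; exact hv)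
        · exact b2 (by rw [a1]; exact hv)
        · exact b2 a2
    have h1 : ((Fintype.card V - G.degree v : ℕ) : ℝ)
        = (Fintype.card V : ℝ) - (G.degree v : ℝ) :=
      Nat.cast_sub (G.degree_lt_card_verts v).le
    have h2 : ((S.filter fun u => G.Adj v u).card : ℝ)
        + ((univ.filter fun e : E => tail e ≠ head e ∧
            ((head e = v ∧ tail e ∉ S) ∨ (tail e = v ∧ head e ∉ S))).card : ℝ)
        = (G.degree v : ℝ) := by exact_mod_cast congrArg (Nat.cast : ℕ → ℝ) hsplit
    rw [h1, hΔ]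
    linarith
  -- Sum C
  have hC : ∑ e : E, (sc e)^2 = (m : ℝ) * (Fintype.card V : ℝ) - 2 * (ℓ : ℝ) := by
    have key : ∀ e : E, (sc e)^2 =
        (if tail e = head e ∧ head e ∈ S then (1:ℝ) else 0)
          + (if tail e ≠ head e ∧
              ((tail e ∈ S ∧ head e ∉ S) ∨ (tail e ∉ S ∧ head e ∈ S)) then (1:ℝ) else 0) := by
      intro e
      rw [hsval]
      exact zeta_ind_C S (tail e) (head e)
    rw [Finset.sum_congr rfl (fun e _ => key e), Finset.sum_add_distrib,
      Finset.sum_boole, Finset.sum_boole]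
    have hcard1 : (univ.filter fun e : E => tail e = head e ∧ head e ∈ S).card
        = ∑ w ∈ S, (Fintype.card V - G.degree w) := by
      have hset : (univ.filter fun e : E => tail e = head e ∧ head e ∈ S)
          = S.biUnion (fun w => univ.filter fun e : E => tail e = w ∧ head e = w) := by
        ext e
        simp only [mem_biUnion, mem_filter, mem_univ, true_and]
        constructor
        · rintro ⟨h1, h2⟩; exact ⟨head e, h2, h1, rfl⟩
        · rintro ⟨w, hw, h1, h2⟩
          exact ⟨h1.trans h2.symm, by rw [h2]; exact hw⟩
      rw [hset, Finset.card_biUnion]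
      · exact Finset.sum_congr rfl fun w _ => hloops w
      · intro w1 _ w2 _ hne
        rw [Function.onFun, Finset.disjoint_left]
        intro e he1 he2
        simp only [mem_filter, mem_univ, true_and] at he1 he2
        exact hne (he1.2.symm.trans he2.2)
    have hhand : ∑ w ∈ S, (G.degree w : ℝ)
        = ((univ.filter fun e : E => tail e ≠ head e ∧
            ((tail e ∈ S ∧ head e ∉ S) ∨ (tail e ∉ S ∧ head e ∈ S))).card : ℝ)
          + 2 * ((univ.filter fun e : E =>
              tail e ≠ head e ∧ tail e ∈ S ∧ head e ∈ S).card : ℝ) := by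
      have e1 : ∀ w : V, (G.degree w : ℝ)
          = ∑ e : E, (if tail e ≠ head e ∧ (tail e = w ∨ head e = w) then (1:ℝ) else 0) := by
        intro w
        rw [Finset.sum_boole, zeta_card_incident G tail head hadj hinj hsurj w]
      calc ∑ w ∈ S, (G.degree w : ℝ)
          = ∑ w ∈ S, ∑ e : E,
              (if tail e ≠ head e ∧ (tail e = w ∨ head e = w) then (1:ℝ) else 0) :=
            Finset.sum_congr rfl fun w _ => e1 w
        _ = ∑ e : E, ∑ w ∈ S,
              (if tail e ≠ head e ∧ (tail e = w ∨ head e = w) then (1:ℝ) else 0) :=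
            Finset.sum_comm
        _ = ∑ e : E, ((if tail e ≠ head e ∧
              ((tail e ∈ S ∧ head e ∉ S) ∨ (tail e ∉ S ∧ head e ∈ S)) then (1:ℝ) else 0)
            + 2 * (if tail e ≠ head e ∧ tail e ∈ S ∧ head e ∈ S then (1:ℝ) else 0)) := by
            apply Finset.sum_congr rfl
            intro e _
            have inner : ∀ w ∈ S,
                (if tail e ≠ head e ∧ (tail e = w ∨ head e = w) then (1:ℝ) else 0)
                = (if tail e = w then (if tail e ≠ head e then (1:ℝ) else 0) else 0)
                  + (if head e = w then (if tail e ≠ head e then (1:ℝ) else 0) else 0) :=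
              fun w _ => zeta_ind_hand1 (tail e) (head e) w
            rw [Finset.sum_congr rfl inner, Finset.sum_add_distrib,
              Finset.sum_ite_eq S (tail e), Finset.sum_ite_eq S (head e)]
            exact zeta_ind_hand2 S (tail e) (head e)
        _ = _ := by
            rw [Finset.sum_add_distrib, ← Finset.mul_sum,
              Finset.sum_boole, Finset.sum_boole]
    have hc1R : ((univ.filter fun e : E => tail e = head e ∧ head e ∈ S).card : ℝ)
        = (m : ℝ) * (Fintype.card V : ℝ) - ∑ w ∈ S, (G.degree w : ℝ) := by
      rw [hcard1, Nat.cast_sum]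
      have : ∀ w ∈ S, ((Fintype.card V - G.degree w : ℕ) : ℝ)
          = (Fintype.card V : ℝ) - (G.degree w : ℝ) := fun w _ =>
        Nat.cast_sub (G.degree_lt_card_verts w).le
      rw [Finset.sum_congr rfl this, Finset.sum_sub_distrib, Finset.sum_const, hS,
        nsmul_eq_mul]
    have hℓR : ((univ.filter fun e : E =>
        tail e ≠ head e ∧ tail e ∈ S ∧ head e ∈ S).card : ℝ) = (ℓ : ℝ) := by
      rw [zeta_card_inner G tail head hadj hinj hsurj S, hℓ]
    rw [hc1R]
    linarith [hhand, hℓR]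
  -- conclusion
  have hζv : ζ v = (∑ e : E, (x v (Sum.inl e))^2)
      - 2 * (m:ℝ)⁻¹ * (∑ e : E, x v (Sum.inl e) * sc e)
      + ((m:ℝ)⁻¹)^2 * (∑ e : E, (sc e)^2) := by
    rw [hζ, Finset.mul_sum, Finset.mul_sum, ← Finset.sum_sub_distrib,
      ← Finset.sum_add_distrib]
    apply Finset.sum_congr rfl
    intro e _
    rw [hzE e]
    ring
  have hm0 : (m:ℝ) ≠ 0 := Nat.cast_ne_zero.mpr (by omega)
  rw [hζv, hA, hB, hC]
  field_simp
  ring
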